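/- For every real number p ≥ 1, with z := p·(p+1), the following closed forms hold for the convergents: (2p+1)·P*_2(2p+1)/P_2(2p+1) - 1 = 1/(12z + 2); (2p+1)·P*_3(2p+1)/P_3(2p+1) - 1 = 5/(60z + 6); and (2p+1)·P*_5(2p+1)/P_5(2p+1) - 1 = (630z + 77)/(7560z² + 1680z + 60). -/
import Mathlib


open Polynomial

/-- Legendre polynomials: `(k+1)·y_{k+1}(x) = (2k+1)·x·y_k(x) - k·y_{k-1}(x)`,
`P_0 = 1`, `P_1 = x`. -/
noncomputable def legP : ℕ → Polynomial ℝ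
  | 0 => 1
  | 1 => X
  | (k+2) => C ((2 * (k : ℝ) + 3) / ((k : ℝ) + 2)) * (X * legP (k+1))
      - C (((k : ℝ) + 1) / ((k : ℝ) + 2)) * legP k

/-- Associated (numerator) Legendre polynomials: same recurrence,
`P*_0 = 0`, `P*_1 = 1`. -/
noncomputable def legPs : ℕ → Polynomial ℝ
  | 0 => 0
  | 1 => 1
  | (k+2) => C ((2 * (k : ℝ) + 3) / ((k : ℝ) + 2)) * (X * legPs (k+1))
      - C (((k : ℝ) + 1) / ((k : ℝ) + 2)) * legPs k

lemma eP2 (x : ℝ) : (legP 2).eval x = (3*x^2-1)/2 := by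
  show (legP (0+2)).eval x = _; simp [legP]; ring
lemma eP3 (x : ℝ) : (legP 3).eval x = (5*x^3-3*x)/2 := by
  show (legP (1+2)).eval x = _; simp [legP, eP2]; ring
lemma eP4 (x : ℝ) : (legP 4).eval x = (35*x^4-30*x^2+3)/8 := by
  show (legP (2+2)).eval x = _; simp [legP, eP2, eP3]; ring
lemma eP5 (x : ℝ) : (legP 5).eval x = (63*x^5-70*x^3+15*x)/8 := by
  show (legP (3+2)).eval x = _; simp [legP, eP3, eP4]; ring
lemma eQ2 (x : ℝ) : (legPs 2).eval x = 3*x/2 := by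
  show (legPs (0+2)).eval x = _; simp [legPs]; ring
lemma eQ3 (x : ℝ) : (legPs 3).eval x = (15*x^2-4)/6 := by
  show (legPs (1+2)).eval x = _; simp [legPs, eQ2]; ring
lemma eQ4 (x : ℝ) : (legPs 4).eval x = (105*x^3-55*x)/24 := by
  show (legPs (2+2)).eval x = _; simp [legPs, eQ2, eQ3]; ring
lemma eQ5 (x : ℝ) : (legPs 5).eval x = (945*x^4-735*x^2+64)/120 := by
  show (legPs (3+2)).eval x = _; simp [legPs, eQ3, eQ4]; ring

/-- Closed forms of the convergents `p_k(2p+1) = (2p+1)·P*_k(2p+1)/P_k(2p+1) - 1`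
for `k = 2, 3, 5` in terms of `z = p(p+1)`. -/
theorem legendre_convergents_closed_forms (p : ℝ) (hp : 1 ≤ p) :
    (2*p + 1) * (legPs 2).eval (2*p + 1) / (legP 2).eval (2*p + 1) - 1 =
      1 / (12 * (p * (p + 1)) + 2) ∧
    (2*p + 1) * (legPs 3).eval (2*p + 1) / (legP 3).eval (2*p + 1) - 1 =
      5 / (60 * (p * (p + 1)) + 6) ∧
    (2*p + 1) * (legPs 5).eval (2*p + 1) / (legP 5).eval (2*p + 1) - 1 =
      (630 * (p * (p + 1)) + 77) /
        (7560 * (p * (p + 1))^2 + 1680 * (p * (p + 1)) + 60) := by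
  have hx : (3:ℝ) ≤ 2*p+1 := by linarith
  have h2 : 3*(2*p+1)^2-1 ≠ 0 := by nlinarith
  have h3 : 5*(2*p+1)^3-3*(2*p+1) ≠ 0 := by nlinarith [sq_nonneg p, sq_nonneg (p+1)]
  have hx0 : (0:ℝ) < 2*p+1 := by linarith
  have h5 : 63*(2*p+1)^5-70*(2*p+1)^3+15*(2*p+1) ≠ 0 := by
    have h9 : (0:ℝ) < 63*(2*p+1)^2-70 := by nlinarith
    nlinarith [mul_pos (pow_pos hx0 3) h9, hx0]
  have d1 : 12 * (p * (p + 1)) + 2 ≠ 0 := by nlinarith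
  have d2 : 60 * (p * (p + 1)) + 6 ≠ 0 := by nlinarith
  have d3 : 7560 * (p * (p + 1))^2 + 1680 * (p * (p + 1)) + 60 ≠ 0 := by
    nlinarith [sq_nonneg (p*(p+1))]
  refine ⟨?_, ?_, ?_⟩
  · rw [eP2, eQ2, sub_eq_iff_eq_add, div_add' _ _ _ d1, div_eq_div_iff (by positivity) d1]; ring
  · rw [eP3, eQ3, sub_eq_iff_eq_add, div_add' _ _ _ d2, div_eq_div_iff (by positivity) d2]; ring
  · rw [eP5, eQ5, sub_eq_iff_eq_add, div_add' _ _ _ d3, div_eq_div_iff (by positivity) d3]; ring
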